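/- Let a > 0, b ≥ 0, σB > 0, σE > 0, c > 0, P_TX > 0, and define C(P) = log2(1 + aP/σB²) − log2(1 + bP/(cP + σE²)). Suppose there exists P' ∈ [0, P_TX] with C(P') > 0 and b/a > σE²/σB². Then C first decreases then increases on [0, P_TX], and max over [0, P_TX] of C(P) is attained at P = P_TX. -/

import Mathlib

open Real Set

theorem stmt_2 (a b c σB σE PTX : ℝ) (ha : 0 < a) (hb : 0 ≤ b) (hc : 0 < c)
    (hσB : 0 < σB) (hσE : 0 < σE) (hPTX : 0 < PTX)
    (C : ℝ → ℝ)
    (hC : ∀ P : ℝ, C P =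
      Real.logb 2 (1 + a * P / σB ^ 2) - Real.logb 2 (1 + b * P / (c * P + σE ^ 2)))
    (hpos : ∃ P' ∈ Set.Icc (0 : ℝ) PTX, 0 < C P')
    (hcond : σE ^ 2 / σB ^ 2 < b / a) :
    (∃ t ∈ Set.Icc (0 : ℝ) PTX,
        AntitoneOn C (Set.Icc 0 t) ∧ MonotoneOn C (Set.Icc t PTX)) ∧
    (∀ P ∈ Set.Icc (0 : ℝ) PTX, C P ≤ C PTX) := by
  have hσB2 : (0:ℝ) < σB ^ 2 := by positivity
  have hσE2 : (0:ℝ) < σE ^ 2 := by positivity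
  have hKneg : a * σE ^ 2 < b * σB ^ 2 := by
    have h := (div_lt_div_iff₀ hσB2 ha).mp hcond
    nlinarith
  set N : ℝ → ℝ := fun P => (σB ^ 2 + a * P) * (c * P + σE ^ 2) with hNdef
  set D : ℝ → ℝ := fun P => (b + c) * P + σE ^ 2 with hDdef
  have hDpos : ∀ P, 0 ≤ P → 0 < D P := by
    intro P hP; simp only [hDdef]; nlinarith
  have hNpos : ∀ P, 0 ≤ P → 0 < N P := by
    intro P hP; simp only [hNdef]
    exact mul_pos (by nlinarith) (by nlinarith)
  -- rewrite C as a single logb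
  have hCg : ∀ P, 0 ≤ P → C P = Real.logb 2 (N P / (σB ^ 2 * D P)) := by
    intro P hP
    have hc1 : (0:ℝ) < c * P + σE ^ 2 := by nlinarith
    have hX : (0:ℝ) < 1 + a * P / σB ^ 2 := by
      have : (0:ℝ) ≤ a * P / σB ^ 2 := by positivity
      linarith
    have hY : (0:ℝ) < 1 + b * P / (c * P + σE ^ 2) := by
      have : (0:ℝ) ≤ b * P / (c * P + σE ^ 2) := by positivity
      linarith
    rw [hC P, ← Real.logb_div hX.ne' hY.ne']
    congr 1
    simp only [hNdef, hDdef]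
    field_simp
    ring
  -- key comparison lemma
  have key : ∀ P₁ P₂, 0 ≤ P₁ → 0 ≤ P₂ → N P₁ * D P₂ ≤ N P₂ * D P₁ → C P₁ ≤ C P₂ := by
    intro P₁ P₂ h₁ h₂ hle
    rw [hCg P₁ h₁, hCg P₂ h₂]
    apply Real.logb_le_logb_of_le (by norm_num) (by positivity)
    rw [div_le_div_iff₀ (by positivity) (by positivity)]
    have hD1 := hDpos P₁ h₁
    have hD2 := hDpos P₂ h₂
    nlinarith
  -- quadratic data
  set A := a * c * (b + c) with hAdef
  set B := a * c * σE ^ 2 with hBdef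
  set K := σE ^ 2 * (a * σE ^ 2 - b * σB ^ 2) with hKdef
  have hA : 0 < A := by positivity
  have hB' : 0 < B := by positivity
  have hK : K < 0 := by
    have : a * σE ^ 2 - b * σB ^ 2 < 0 := by linarith
    exact mul_neg_of_pos_of_neg hσE2 this
  set r := Real.sqrt (B ^ 2 - A * K) with hrdef
  have hr2 : r ^ 2 = B ^ 2 - A * K := Real.sq_sqrt (by nlinarith)
  have hrnn : 0 ≤ r := Real.sqrt_nonneg _
  have hrB : B < r := by nlinarith
  set t₀ := (r - B) / A with ht₀def
  have ht₀pos : 0 < t₀ := div_pos (by linarith) hA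
  have hroot : A * t₀ ^ 2 + 2 * B * t₀ + K = 0 := by
    have : A * t₀ ^ 2 + 2 * B * t₀ + K = (r ^ 2 - (B ^ 2 - A * K)) / A := by
      rw [ht₀def]
      field_simp
      ring
    rw [this, hr2]
    simp
  -- the difference identity
  have hdiff : ∀ x y : ℝ, N y * D x - N x * D y
      = (y - x) * (A * x * y + B * (x + y) + K) := by
    intro x y
    simp only [hNdef, hDdef, hAdef, hBdef, hKdef]
    ring
  -- antitone on [0, t₀]
  have hanti : AntitoneOn C (Set.Icc 0 t₀) := by
    intro x hx y hy hxy
    apply key y x hy.1 hx.1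
    have hid := hdiff y x
    have h1 : A * (y * x) ≤ A * (t₀ * t₀) :=
      mul_le_mul_of_nonneg_left (mul_le_mul hy.2 hx.2 hx.1 ht₀pos.le) hA.le
    have h2 : B * (y + x) ≤ B * (t₀ + t₀) :=
      mul_le_mul_of_nonneg_left (by linarith [hx.2, hy.2]) hB'.le
    have hh : A * y * x + B * (y + x) + K ≤ 0 := by
      have e : A * (t₀ * t₀) + B * (t₀ + t₀) + K = A * t₀ ^ 2 + 2 * B * t₀ + K := by ring
      have e2 : A * y * x = A * (y * x) := by ring
      linarith [h1, h2, hroot, e, e2]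
    have hprod : 0 ≤ (x - y) * (A * y * x + B * (y + x) + K) :=
      mul_nonneg_of_nonpos_of_nonpos (by linarith) hh
    linarith [hid]
  -- monotone on [t₀, ∞)
  have hmono : ∀ T, MonotoneOn C (Set.Icc t₀ T) := by
    intro T x hx y hy hxy
    apply key x y (le_trans ht₀pos.le hx.1) (le_trans ht₀pos.le hy.1)
    have hid := hdiff x y
    have h1 : A * (t₀ * t₀) ≤ A * (x * y) :=
      mul_le_mul_of_nonneg_left
        (mul_le_mul hx.1 hy.1 ht₀pos.le (le_trans ht₀pos.le hx.1)) hA.le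
    have h2 : B * (t₀ + t₀) ≤ B * (x + y) :=
      mul_le_mul_of_nonneg_left (by linarith [hx.1, hy.1]) hB'.le
    have hh : 0 ≤ A * x * y + B * (x + y) + K := by
      have e : A * (t₀ * t₀) + B * (t₀ + t₀) + K = A * t₀ ^ 2 + 2 * B * t₀ + K := by ring
      have e2 : A * x * y = A * (x * y) := by ring
      linarith [h1, h2, hroot, e, e2]
    have hprod := mul_nonneg (by linarith : (0:ℝ) ≤ y - x) hh
    linarith [hid]
  have hC0 : C 0 = 0 := by
    simp [hC 0]
  obtain ⟨P', hP'mem, hP'pos⟩ := hpos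
  by_cases hcase : t₀ ≤ PTX
  · -- P' must be beyond t₀
    have hP'gt : t₀ < P' := by
      by_contra hcon
      push_neg at hcon
      have := hanti (Set.mem_Icc.mpr ⟨le_refl 0, ht₀pos.le⟩)
        (Set.mem_Icc.mpr ⟨hP'mem.1, hcon⟩) hP'mem.1
      rw [hC0] at this
      linarith
    have hCPTX : 0 < C PTX := by
      have := hmono PTX (Set.mem_Icc.mpr ⟨hP'gt.le, hP'mem.2⟩)
        (Set.mem_Icc.mpr ⟨hcase, le_refl PTX⟩) hP'mem.2
      linarith
    refine ⟨⟨t₀, Set.mem_Icc.mpr ⟨ht₀pos.le, hcase⟩, hanti, hmono PTX⟩, ?_⟩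
    intro P hP
    by_cases hPt : P ≤ t₀
    · have := hanti (Set.mem_Icc.mpr ⟨le_refl 0, ht₀pos.le⟩)
        (Set.mem_Icc.mpr ⟨hP.1, hPt⟩) hP.1
      rw [hC0] at this
      linarith
    · push_neg at hPt
      exact hmono PTX (Set.mem_Icc.mpr ⟨hPt.le, hP.2⟩)
        (Set.mem_Icc.mpr ⟨hcase, le_refl PTX⟩) hP.2
  · exfalso
    push_neg at hcase
    have := hanti (Set.mem_Icc.mpr ⟨le_refl 0, ht₀pos.le⟩)
      (Set.mem_Icc.mpr ⟨hP'mem.1, le_trans hP'mem.2 hcase.le⟩) hP'mem.1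
    rw [hC0] at this
    linarith
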